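/- arXiv:1111.1559 — 6 statements merged into one kernel-verified Lean document; each statement's English description precedes it below -/
import Mathlib

section
/- Let β₁, β₂ ∈ ℝ and let z : ℝ → ℂ be differentiable with z′(t) = (β₁ + i) z(t) + β₂ z(t)|z(t)|² + z(t)|z(t)|⁴ for all t. Suppose there is c > 0 with |z(t)| = c for all t ∈ ℝ. Then β₁ + β₂c² + c⁴ = 0 and z(t) = e^{it} z(0) for all t; in particular z is periodic with period 2π. -/
/-- Solutions of the Bautin normal form `z′ = (β₁ + i)z + β₂ z|z|² + z|z|⁴`
with constant modulus `c > 0` are uniform rotations: `β₁ + β₂c² + c⁴ = 0`,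
`z(t) = e^{it} z(0)`, and `z` is `2π`-periodic. -/
theorem stmt_7 (β₁ β₂ : ℝ) (z : ℝ → ℂ)
    (hz : ∀ t : ℝ, HasDerivAt z
      (((β₁ : ℂ) + Complex.I) * z t
        + (β₂ : ℂ) * z t * ((‖z t‖ : ℂ)) ^ 2
        + z t * ((‖z t‖ : ℂ)) ^ 4) t)
    (c : ℝ) (hc : 0 < c) (hmod : ∀ t : ℝ, ‖z t‖ = c) :
    β₁ + β₂ * c ^ 2 + c ^ 4 = 0
    ∧ (∀ t : ℝ, z t = Complex.exp (Complex.I * t) * z 0)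
    ∧ ∀ t : ℝ, z (t + 2 * Real.pi) = z t := by
  set μ : ℂ := ((β₁ + β₂ * c ^ 2 + c ^ 4 : ℝ) : ℂ) + Complex.I with hμ
  have hz' : ∀ t : ℝ, HasDerivAt z (μ * z t) t := by
    intro t
    have := hz t
    rw [hmod t] at this
    convert this using 1
    push_cast [hμ]
    ring
  -- w t = exp(-(μ t)) * z t has derivative 0
  have hw : ∀ t : ℝ, HasDerivAt (fun t : ℝ => Complex.exp (-(μ * t)) * z t) 0 t := by
    intro t
    have h1 : HasDerivAt (fun t : ℝ => Complex.exp (-(μ * t))) (-μ * Complex.exp (-(μ * t))) t := by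
      have h0 : HasDerivAt (fun t : ℝ => -(μ * (t : ℂ))) (-μ) t := by
        have h00 := ((Complex.ofRealCLM.hasDerivAt (x := t)).const_mul μ).neg
        simp only [Complex.ofRealCLM_apply, Complex.ofReal_one, mul_one] at h00
        exact h00
      simpa [mul_comm] using h0.cexp
    have := h1.mul (hz' t)
    rw [show (-μ * Complex.exp (-(μ * t)) * z t + Complex.exp (-(μ * t)) * (μ * z t)) = 0 by ring] at this
    exact this
  have hconst : ∀ t : ℝ, Complex.exp (-(μ * t)) * z t = z 0 := by
    have hd : Differentiable ℝ (fun t : ℝ => Complex.exp (-(μ * t)) * z t) :=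
      fun t => (hw t).differentiableAt
    have h0 : ∀ t : ℝ, deriv (fun t : ℝ => Complex.exp (-(μ * t)) * z t) t = 0 :=
      fun t => (hw t).deriv
    intro t
    have := is_const_of_deriv_eq_zero hd h0 t 0
    simpa using this
  have hzt : ∀ t : ℝ, z t = Complex.exp (μ * t) * z 0 := by
    intro t
    have := hconst t
    have h := congrArg (fun w => Complex.exp (μ * t) * w) this
    simp only [← mul_assoc, ← Complex.exp_add] at h
    simpa using h
  -- modulus at t = 1 gives Re μ = 0
  have hre : β₁ + β₂ * c ^ 2 + c ^ 4 = 0 := by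
    have h1 := hmod 1
    rw [hzt 1, norm_mul, hmod 0, Complex.norm_exp] at h1
    have : Real.exp ((μ * ((1:ℝ):ℂ)).re) = 1 := by
      refine mul_right_cancel₀ (ne_of_gt hc) ?_
      rw [h1, one_mul]
    have hre0 : (μ * ((1:ℝ):ℂ)).re = 0 := by
      have h2 : Real.exp ((μ * ((1:ℝ):ℂ)).re) = Real.exp 0 := by rw [this, Real.exp_zero]
      exact Real.exp_eq_exp.mp h2
    rw [hμ] at hre0
    simp only [Complex.ofReal_one, mul_one, Complex.add_re, Complex.ofReal_re, Complex.I_re, add_zero] at hre0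
    exact hre0
  have hμI : μ = Complex.I := by
    rw [hμ, hre]; simp
  refine ⟨hre, fun t => by rw [hzt t, hμI], fun t => ?_⟩
  rw [hzt t, hzt (t + 2 * Real.pi), hμI]
  congr 1
  push_cast
  rw [mul_add, Complex.exp_add]
  have : Complex.exp (Complex.I * (2 * Real.pi)) = 1 := by
    rw [mul_comm]
    simpa [mul_comm] using Complex.exp_int_mul_two_pi_mul_I 1
  simp [this]
end

section
/- Let β₁ > 0 and β₂ ∈ ℝ with β₂² < 4β₁ (in particular this holds whenever −2√β₁ < β₂). Then there is no ρ > 0 with ρ⁴ + β₂ρ² + β₁ = 0; consequently, every differentiable periodic function z : ℝ → ℂ with z(t) ≠ 0 for all t satisfying z′(t) = (β₁ + i) z(t) + β₂ z(t)|z(t)|² + z(t)|z(t)|⁴ for all t must fail to exist, i.e., the only periodic solutions of this ODE are those vanishing at some point. -/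
/-- For `β₁ > 0` and `β₂² < 4β₁`, the quartic `ρ⁴ + β₂ρ² + β₁ = 0` has no
positive root, and consequently every periodic solution of the Bautin normal
form `z′ = (β₁ + i)z + β₂ z|z|² + z|z|⁴` must vanish somewhere. -/
theorem stmt_9 (β₁ β₂ : ℝ) (hβ₁ : 0 < β₁) (hdisc : β₂ ^ 2 < 4 * β₁) :
    (∀ ρ : ℝ, 0 < ρ → ρ ^ 4 + β₂ * ρ ^ 2 + β₁ ≠ 0)
    ∧ ∀ (z : ℝ → ℂ) (T : ℝ), 0 < T →
        (∀ t : ℝ, HasDerivAt z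
          (((β₁ : ℂ) + Complex.I) * z t
            + (β₂ : ℂ) * z t * (((‖z t‖ : ℝ) : ℂ)) ^ 2
            + z t * (((‖z t‖ : ℝ) : ℂ)) ^ 4) t) →
        (∀ t : ℝ, z (t + T) = z t) →
        ∃ t : ℝ, z t = 0 := by
  constructor
  · intro ρ hρ h
    nlinarith [sq_nonneg (2 * ρ ^ 2 + β₂)]
  · intro z T hT hz hper
    by_contra h
    push_neg at h
    set u : ℝ → ℝ := fun t => ‖z t‖ ^ 2 with hu_def
    have hupos : ∀ t, 0 < u t := fun t => by
      simp only [hu_def]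
      exact pow_pos (norm_pos_iff.mpr (h t)) 2
    have habs : ∀ t, (((‖z t‖ : ℝ) : ℂ)) ^ 2 = ((u t : ℝ) : ℂ) := by
      intro t
      rw [show (((‖z t‖ : ℝ) : ℂ)) ^ 2 = ((‖z t‖ ^ 2 : ℝ) : ℂ) by
        push_cast; ring]
    have key : ∀ t,
        ((starRingEnd ℂ) (z t) * (((β₁ : ℂ) + Complex.I) * z t
          + (β₂ : ℂ) * z t * (((‖z t‖ : ℝ) : ℂ)) ^ 2
          + z t * (((‖z t‖ : ℝ) : ℂ)) ^ 4)).re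
        = β₁ * u t + β₂ * (u t) ^ 2 + (u t) ^ 3 := by
      intro t
      have hconj : (starRingEnd ℂ) (z t) * z t = ((u t : ℝ) : ℂ) := by
        rw [← Complex.normSq_eq_conj_mul_self]
        norm_cast
        simp [hu_def, Complex.normSq_eq_norm_sq]
      have h4 : (((‖z t‖ : ℝ) : ℂ)) ^ 4 = (((u t : ℝ) : ℂ)) ^ 2 := by
        rw [show (((‖z t‖ : ℝ) : ℂ)) ^ 4 = ((((‖z t‖ : ℝ) : ℂ)) ^ 2) ^ 2 by ring,
          habs t]
      rw [habs t, h4]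
      have : (starRingEnd ℂ) (z t) * (((β₁ : ℂ) + Complex.I) * z t
          + (β₂ : ℂ) * z t * ((u t : ℝ) : ℂ)
          + z t * (((u t : ℝ) : ℂ)) ^ 2)
          = (((β₁ : ℂ) + Complex.I) + (β₂ : ℂ) * ((u t : ℝ) : ℂ)
              + (((u t : ℝ) : ℂ)) ^ 2) * (((u t : ℝ) : ℂ)) := by
        rw [← hconj]; ring
      rw [this]
      simp [Complex.mul_re, Complex.add_re, Complex.add_im, ← Complex.ofReal_pow,
        Complex.ofReal_re, Complex.ofReal_im]
      ring
    have hu : ∀ t, HasDerivAt u (2 * (β₁ * u t + β₂ * (u t) ^ 2 + (u t) ^ 3)) t := by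
      intro t
      have hder := (hz t).norm_sq
      rw [Complex.inner, mul_comm _ ((starRingEnd ℂ) (z t)), key t] at hder
      exact hder
    have hmono : StrictMono u :=
      strictMono_of_hasDerivAt_pos hu (fun t => by
        have h1 := hupos t
        have h2 : 0 < β₁ + β₂ * u t + (u t) ^ 2 := by
          nlinarith [sq_nonneg (2 * u t + β₂)]
        nlinarith)
    have hlt : u 0 < u (0 + T) := hmono (by linarith)
    have heq : u (0 + T) = u 0 := by simp only [hu_def]; rw [hper 0]
    linarith
end

section
/- Let β₁ ≥ 0 and β₂ ≥ 0, and let z : ℝ → ℂ be differentiable with z′(t) = (β₁ + i) z(t) + β₂ z(t)|z(t)|² + z(t)|z(t)|⁴ for all t. If a < b and z(t) ≠ 0 for all t ∈ [a, b], then |z(b)| > |z(a)|; that is, the modulus of every nonvanishing solution is strictly increasing. -/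
/-- For `β₁ ≥ 0`, `β₂ ≥ 0`, the modulus of every nonvanishing solution of the
Bautin normal form `z′ = (β₁ + i)z + β₂ z|z|² + z|z|⁴` is strictly
increasing. -/
theorem stmt_11 (β₁ β₂ : ℝ) (hβ₁ : 0 ≤ β₁) (hβ₂ : 0 ≤ β₂) (z : ℝ → ℂ)
    (hz : ∀ t : ℝ, HasDerivAt z
      (((β₁ : ℂ) + Complex.I) * z t
        + (β₂ : ℂ) * z t * ((‖z t‖ : ℂ)) ^ 2
        + z t * ((‖z t‖ : ℂ)) ^ 4) t)
    (a b : ℝ) (hab : a < b) (hnz : ∀ t ∈ Set.Icc a b, z t ≠ 0) :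
    ‖z a‖ < ‖z b‖ := by
  set r : ℝ → ℝ := fun t => Complex.normSq (z t) with hr
  have key : ∀ t, HasDerivAt r
      (2 * (β₁ + β₂ * r t + (r t) ^ 2) * r t) t := by
    intro t
    have hzt := hz t
    have hre : HasDerivAt (fun t => (z t).re)
        ((((β₁ : ℂ) + Complex.I) * z t
          + (β₂ : ℂ) * z t * ((‖z t‖ : ℂ)) ^ 2
          + z t * ((‖z t‖ : ℂ)) ^ 4).re) t :=
      (Complex.reCLM.hasFDerivAt.comp_hasDerivAt t hzt)
    have him : HasDerivAt (fun t => (z t).im)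
        ((((β₁ : ℂ) + Complex.I) * z t
          + (β₂ : ℂ) * z t * ((‖z t‖ : ℂ)) ^ 2
          + z t * ((‖z t‖ : ℂ)) ^ 4).im) t :=
      (Complex.imCLM.hasFDerivAt.comp_hasDerivAt t hzt)
    have h := (hre.mul hre).add (him.mul him)
    have hrs : r = fun t => (z t).re * (z t).re + (z t).im * (z t).im := by
      funext t; simp [hr, Complex.normSq_apply]
    rw [hrs]
    refine h.congr_deriv ?_
    have hA : (‖z t‖ : ℝ) ^ 2 = r t := Complex.sq_norm (z t)
    simp only [← Complex.ofReal_pow, Complex.add_re, Complex.add_im,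
      Complex.mul_re, Complex.mul_im, Complex.I_re, Complex.I_im,
      Complex.ofReal_re, Complex.ofReal_im]
    simp only [hr, Complex.normSq_apply] at hA ⊢
    have hA4 : ‖z t‖ ^ 4 = ((z t).re * (z t).re + (z t).im * (z t).im) ^ 2 := by
      rw [show (4 : ℕ) = 2 * 2 from rfl, pow_mul, hA]
    rw [hA4, hA]; ring
  have hmono : StrictMonoOn r (Set.Icc a b) := by
    apply StrictMonoOn.mono ?_ (le_refl _)
    apply strictMonoOn_of_deriv_pos (convex_Icc a b)
    · exact fun t _ => (key t).continuousAt.continuousWithinAt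
    · intro t ht
      rw [interior_Icc] at ht
      rw [(key t).deriv]
      have hrt : 0 < r t :=
        Complex.normSq_pos.mpr (hnz t ⟨le_of_lt ht.1, le_of_lt ht.2⟩)
      positivity
  have h := hmono ⟨le_refl a, le_of_lt hab⟩ ⟨le_of_lt hab, le_refl b⟩ hab
  have ha := Complex.sq_norm (z a)
  have hb := Complex.sq_norm (z b)
  nlinarith [norm_nonneg (z a), norm_nonneg (z b), h, ha, hb]
end

section
/- Let β₁ > 0, β₂ < −2√β₁, and set ρ₁ = √((−β₂ − √(β₂² − 4β₁))/2), ρ₂ = √((−β₂ + √(β₂² − 4β₁))/2). Let z : ℝ → ℂ be differentiable with z′(t) = (β₁ + i) z(t) + β₂ z(t)|z(t)|² + z(t)|z(t)|⁴ for all t. If a < b and ρ₁ < |z(t)| < ρ₂ for all t ∈ [a, b], then |z(b)| < |z(a)|; that is, the modulus is strictly decreasing in the annulus between the two limit cycles. -/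
/-- For `β₁ > 0`, `β₂ < −2√β₁`, the modulus of a solution of the Bautin
normal form `z′ = (β₁ + i)z + β₂ z|z|² + z|z|⁴` is strictly decreasing in
the annulus `ρ₁ < |z| < ρ₂` between the two limit cycles. -/
theorem stmt_12 (β₁ β₂ : ℝ) (hβ₁ : 0 < β₁) (hβ₂ : β₂ < -2 * Real.sqrt β₁)
    (ρ₁ ρ₂ : ℝ)
    (hρ₁ : ρ₁ = Real.sqrt ((-β₂ - Real.sqrt (β₂ ^ 2 - 4 * β₁)) / 2))
    (hρ₂ : ρ₂ = Real.sqrt ((-β₂ + Real.sqrt (β₂ ^ 2 - 4 * β₁)) / 2))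
    (z : ℝ → ℂ)
    (hz : ∀ t : ℝ, HasDerivAt z
      (((β₁ : ℂ) + Complex.I) * z t
        + (β₂ : ℂ) * z t * ((‖z t‖ : ℂ)) ^ 2
        + z t * ((‖z t‖ : ℂ)) ^ 4) t)
    (a b : ℝ) (hab : a < b)
    (hball : ∀ t ∈ Set.Icc a b, ρ₁ < ‖z t‖ ∧ ‖z t‖ < ρ₂) :
    ‖z b‖ < ‖z a‖ := by
  set D := β₂ ^ 2 - 4 * β₁ with hD
  have hsβ : Real.sqrt β₁ ^ 2 = β₁ := Real.sq_sqrt hβ₁.le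
  have hβ₂neg : β₂ < 0 := by nlinarith [Real.sqrt_nonneg β₁]
  have hDpos : 0 < D := by nlinarith [Real.sqrt_nonneg β₁]
  have hsD : Real.sqrt D ^ 2 = D := Real.sq_sqrt hDpos.le
  have hsDlt : Real.sqrt D < -β₂ := by
    rw [show (-β₂ : ℝ) = Real.sqrt (β₂ ^ 2) by
      rw [Real.sqrt_sq_eq_abs, abs_of_neg hβ₂neg]]
    exact Real.sqrt_lt_sqrt hDpos.le (by nlinarith)
  have hρ₁sq : ρ₁ ^ 2 = (-β₂ - Real.sqrt D) / 2 := by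
    rw [hρ₁]; exact Real.sq_sqrt (by linarith)
  have hρ₂sq : ρ₂ ^ 2 = (-β₂ + Real.sqrt D) / 2 := by
    rw [hρ₂]; exact Real.sq_sqrt (by nlinarith [Real.sqrt_nonneg D])
  have hρ₁nn : 0 ≤ ρ₁ := hρ₁ ▸ Real.sqrt_nonneg _
  -- the squared modulus and its derivative
  set f : ℝ → ℝ := fun t => (z t).re ^ 2 + (z t).im ^ 2 with hf
  have habs : ∀ t, ‖z t‖ ^ 2 = f t := by
    intro t
    rw [Complex.sq_norm, Complex.normSq_apply, hf]; ring
  have hderiv : ∀ t, HasDerivAt f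
      (2 * f t * (β₁ + β₂ * f t + f t ^ 2)) t := by
    intro t
    set w := (((β₁ : ℂ) + Complex.I) * z t
        + (β₂ : ℂ) * z t * ((‖z t‖ : ℂ)) ^ 2
        + z t * ((‖z t‖ : ℂ)) ^ 4) with hw
    have hre : HasDerivAt (fun t => (z t).re) w.re t :=
      Complex.reCLM.hasFDerivAt.comp_hasDerivAt t (hz t)
    have him : HasDerivAt (fun t => (z t).im) w.im t :=
      Complex.imCLM.hasFDerivAt.comp_hasDerivAt t (hz t)
    have H := (hre.pow 2).add (him.pow 2)
    refine H.congr_deriv ?_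
    have h2 : ((‖z t‖ : ℂ)) ^ 2 = ((f t : ℝ) : ℂ) := by
      rw [← Complex.ofReal_pow, habs t]
    have hwre : w.re = (z t).re * (β₁ + β₂ * f t + f t ^ 2)
        - (z t).im * 1 := by
      rw [hw]
      simp [h2, pow_succ, pow_zero, Complex.add_re, Complex.mul_re,
        Complex.add_im, Complex.mul_im, Complex.ofReal_re, Complex.ofReal_im,
        Complex.I_re, Complex.I_im]
      have h := habs t; rw [pow_two] at h
      linear_combination (z t).re * f t * h
    have hwim : w.im = (z t).re * 1
        + (z t).im * (β₁ + β₂ * f t + f t ^ 2) := by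
      rw [hw]
      simp [h2, pow_succ, pow_zero, Complex.add_re, Complex.mul_re,
        Complex.add_im, Complex.mul_im, Complex.ofReal_re, Complex.ofReal_im,
        Complex.I_re, Complex.I_im]
      have h := habs t; rw [pow_two] at h
      linear_combination (z t).im * f t * h
    rw [hwre, hwim, hf]; ring
  -- the derivative is negative on [a, b]
  have hneg : ∀ t ∈ Set.Icc a b, 2 * f t * (β₁ + β₂ * f t + f t ^ 2) < 0 := by
    intro t ht
    obtain ⟨h1, h2⟩ := hball t ht
    have hr0 : 0 ≤ ‖z t‖ := norm_nonneg _
    have hs1 : ρ₁ ^ 2 < f t := by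
      rw [← habs t]; exact pow_lt_pow_left₀ h1 hρ₁nn (by norm_num)
    have hs2 : f t < ρ₂ ^ 2 := by
      rw [← habs t]; exact pow_lt_pow_left₀ h2 hr0 (by norm_num)
    have hfpos : 0 < f t := lt_of_le_of_lt (by positivity) hs1
    have hP : β₁ + β₂ * f t + f t ^ 2 < 0 := by
      nlinarith [mul_pos (sub_pos.mpr hs1) (sub_pos.mpr hs2)]
    nlinarith
  -- strict antitonicity
  have hanti : StrictAntiOn f (Set.Icc a b) := by
    apply strictAntiOn_of_deriv_neg (convex_Icc a b)
    · exact fun t _ => ((hderiv t).continuousAt).continuousWithinAt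
    · intro t ht
      rw [interior_Icc] at ht
      rw [(hderiv t).deriv]
      exact hneg t (Set.mem_Icc_of_Ioo ht)
  have hfb : f b < f a := hanti (Set.left_mem_Icc.mpr hab.le)
    (Set.right_mem_Icc.mpr hab.le) hab
  have := habs a; have := habs b
  nlinarith [norm_nonneg (z a), norm_nonneg (z b)]
end

section
/- Let β₁ > 0, β₂ < −2√β₁, and set ρ₁ = √((−β₂ − √(β₂² − 4β₁))/2), ρ₂ = √((−β₂ + √(β₂² − 4β₁))/2). Let z : ℝ → ℂ be differentiable with z′(t) = (β₁ + i) z(t) + β₂ z(t)|z(t)|² + z(t)|z(t)|⁴ for all t, and let a < b. If 0 < |z(t)| < ρ₁ for all t ∈ [a,b], then |z(b)| > |z(a)|; likewise, if |z(t)| > ρ₂ for all t ∈ [a,b], then |z(b)| > |z(a)|. -/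
/-- For `β₁ > 0`, `β₂ < −2√β₁`, the modulus of a solution of the Bautin
normal form `z′ = (β₁ + i)z + β₂ z|z|² + z|z|⁴` is strictly increasing both
inside the inner limit cycle (`0 < |z| < ρ₁`) and outside the outer one
(`|z| > ρ₂`). -/
theorem stmt_13 (β₁ β₂ : ℝ) (hβ₁ : 0 < β₁) (hβ₂ : β₂ < -2 * Real.sqrt β₁)
    (ρ₁ ρ₂ : ℝ)
    (hρ₁ : ρ₁ = Real.sqrt ((-β₂ - Real.sqrt (β₂ ^ 2 - 4 * β₁)) / 2))
    (hρ₂ : ρ₂ = Real.sqrt ((-β₂ + Real.sqrt (β₂ ^ 2 - 4 * β₁)) / 2))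
    (z : ℝ → ℂ)
    (hz : ∀ t : ℝ, HasDerivAt z
      (((β₁ : ℂ) + Complex.I) * z t
        + (β₂ : ℂ) * z t * ((‖z t‖ : ℂ)) ^ 2
        + z t * ((‖z t‖ : ℂ)) ^ 4) t)
    (a b : ℝ) (hab : a < b) :
    ((∀ t ∈ Set.Icc a b, 0 < ‖z t‖ ∧ ‖z t‖ < ρ₁) →
        ‖z a‖ < ‖z b‖)
    ∧ ((∀ t ∈ Set.Icc a b, ρ₂ < ‖z t‖) →
        ‖z a‖ < ‖z b‖) := by
  -- quadratic facts
  have hsβ : Real.sqrt β₁ ^ 2 = β₁ := Real.sq_sqrt hβ₁.le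
  have hsβ0 : 0 ≤ Real.sqrt β₁ := Real.sqrt_nonneg _
  have hD : 0 < β₂ ^ 2 - 4 * β₁ := by nlinarith
  set sD := Real.sqrt (β₂ ^ 2 - 4 * β₁) with hsDdef
  have hsD2 : sD ^ 2 = β₂ ^ 2 - 4 * β₁ := Real.sq_sqrt hD.le
  have hsD0 : 0 ≤ sD := Real.sqrt_nonneg _
  have hβ₂neg : β₂ < 0 := by nlinarith
  have hsDlt : sD < -β₂ := by nlinarith
  have hx₁ : 0 < (-β₂ - sD) / 2 := by linarith
  have hx₂ : 0 < (-β₂ + sD) / 2 := by linarith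
  have hρ₁sq : ρ₁ ^ 2 = (-β₂ - sD) / 2 := by rw [hρ₁]; exact Real.sq_sqrt hx₁.le
  have hρ₂sq : ρ₂ ^ 2 = (-β₂ + sD) / 2 := by rw [hρ₂]; exact Real.sq_sqrt hx₂.le
  have hρ₁0 : 0 ≤ ρ₁ := hρ₁ ▸ Real.sqrt_nonneg _
  have hρ₂0 : 0 ≤ ρ₂ := hρ₂ ▸ Real.sqrt_nonneg _
  -- derivative of the squared modulus
  set u : ℝ → ℝ := fun s => Complex.normSq (z s) with hu
  have hud : ∀ t : ℝ, HasDerivAt u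
      (2 * u t * (β₁ + β₂ * u t + u t ^ 2)) t := by
    intro t
    set w : ℂ := ((β₁ : ℂ) + Complex.I) * z t
        + (β₂ : ℂ) * z t * ((‖z t‖ : ℂ)) ^ 2
        + z t * ((‖z t‖ : ℂ)) ^ 4 with hw
    have hre : HasDerivAt (fun s => (z s).re) w.re t :=
      (Complex.reCLM.hasFDerivAt.comp_hasDerivAt t (hz t))
    have him : HasDerivAt (fun s => (z s).im) w.im t :=
      (Complex.imCLM.hasFDerivAt.comp_hasDerivAt t (hz t))
    have h2 := (hre.mul hre).add (him.mul him)
    have hfun : u = fun s => (z s).re * (z s).re + (z s).im * (z s).im := by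
      funext s; simp [hu, Complex.normSq_apply]
    rw [hfun]
    refine HasDerivAt.congr_deriv h2 ?_
    have hA2 : ((‖z t‖ : ℂ)) ^ 2 = ((Complex.normSq (z t) : ℝ) : ℂ) := by
      rw [← Complex.ofReal_pow, Complex.sq_norm]
    have hA4 : ((‖z t‖ : ℂ)) ^ 4 = ((Complex.normSq (z t) ^ 2 : ℝ) : ℂ) := by
      rw [show (4:ℕ) = 2*2 from rfl, pow_mul, hA2, ← Complex.ofReal_pow]
    rw [hw, hA2, hA4]
    simp only [Complex.add_re, Complex.add_im, Complex.mul_re, Complex.mul_im,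
      Complex.ofReal_re, Complex.ofReal_im, Complex.I_re, Complex.I_im,
      Complex.normSq_apply]
    ring
  -- general increase criterion
  have key : ∀ (h : ∀ t ∈ Set.Icc a b,
        0 < u t ∧ 0 < β₁ + β₂ * u t + u t ^ 2),
      ‖z a‖ < ‖z b‖ := by
    intro h
    have hcont : ContinuousOn u (Set.Icc a b) :=
      (fun t _ => ((hud t).continuousAt).continuousWithinAt)
    have hmono : StrictMonoOn u (Set.Icc a b) := by
      apply strictMonoOn_of_deriv_pos (convex_Icc a b) hcont
      intro x hx
      rw [interior_Icc] at hx
      have hx' : x ∈ Set.Icc a b := Set.mem_Icc.2 ⟨hx.1.le, hx.2.le⟩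
      rw [(hud x).deriv]
      obtain ⟨p1, p2⟩ := h x hx'
      exact mul_pos (mul_pos two_pos p1) p2
    have huab : u a < u b :=
      hmono (Set.left_mem_Icc.2 hab.le) (Set.right_mem_Icc.2 hab.le) hab
    have hsq : ‖z a‖ ^ 2 < ‖z b‖ ^ 2 := by
      rwa [Complex.sq_norm, Complex.sq_norm]
    exact lt_of_pow_lt_pow_left₀ 2 (norm_nonneg _) hsq
  constructor
  · intro h
    apply key
    intro t ht
    obtain ⟨h0, h1⟩ := h t ht
    have hut : u t = ‖z t‖ ^ 2 := (Complex.sq_norm _).symm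
    have h0' : 0 < u t := by rw [hut]; positivity
    refine ⟨h0', ?_⟩
    have hlt : u t < (-β₂ - sD) / 2 := by
      rw [hut, ← hρ₁sq]
      exact pow_lt_pow_left₀ h1 (norm_nonneg _) two_ne_zero
    nlinarith [h0'.le, mul_pos (sub_pos.2 hlt) (sub_pos.2 (show u t < (-β₂ + sD)/2 by linarith))]
  · intro h
    apply key
    intro t ht
    have h1 := h t ht
    have hut : u t = ‖z t‖ ^ 2 := (Complex.sq_norm _).symm
    have hgt : (-β₂ + sD) / 2 < u t := by
      rw [hut, ← hρ₂sq]
      exact pow_lt_pow_left₀ h1 hρ₂0 two_ne_zero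
    have h0' : 0 < u t := lt_trans hx₂ hgt
    refine ⟨h0', ?_⟩
    nlinarith [mul_pos (sub_pos.2 hgt) (sub_pos.2 (show (-β₂ - sD)/2 < u t by linarith))]
end

section
/- Let β₁ > 0 and β₂ = −2√β₁, and let z : ℝ → ℂ be differentiable with z′(t) = (β₁ + i) z(t) + β₂ z(t)|z(t)|² + z(t)|z(t)|⁴ for all t. If a < b and for all t ∈ [a, b] one has z(t) ≠ 0 and |z(t)| ≠ β₁^{1/4}, then |z(b)| > |z(a)|. -/
/-- On the curve `β₂ = −2√β₁` (with `β₁ > 0`), the modulus of every solution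
of the Bautin normal form `z′ = (β₁ + i)z + β₂ z|z|² + z|z|⁴` that avoids both
the origin and the semistable circle of radius `β₁^{1/4}` is strictly
increasing. -/
theorem stmt_16 (β₁ β₂ : ℝ) (hβ₁ : 0 < β₁) (hβ₂ : β₂ = -2 * Real.sqrt β₁)
    (z : ℝ → ℂ)
    (hz : ∀ t : ℝ, HasDerivAt z
      (((β₁ : ℂ) + Complex.I) * z t
        + (β₂ : ℂ) * z t * ((‖z t‖ : ℂ)) ^ 2
        + z t * ((‖z t‖ : ℂ)) ^ 4) t)
    (a b : ℝ) (hab : a < b)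
    (havoid : ∀ t ∈ Set.Icc a b,
        z t ≠ 0 ∧ ‖z t‖ ≠ β₁ ^ ((1 : ℝ) / 4)) :
    ‖z a‖ < ‖z b‖ := by
  set r : ℝ → ℝ := fun s => (‖z s‖) ^ 2 with hr
  set d : ℝ → ℝ := fun s => 2 * r s * (β₁ + β₂ * r s + r s ^ 2) with hd
  have hderiv : ∀ t : ℝ, HasDerivAt r (d t) t := by
    intro t
    set A : ℝ := ‖z t‖ with hA
    set c : ℂ := (β₁ : ℂ) + Complex.I + (β₂ : ℂ) * (A : ℂ) ^ 2 + (A : ℂ) ^ 4 with hc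
    have hz' : HasDerivAt z (c * z t) t := by
      have h := hz t
      convert h using 1
      rw [hc]; ring
    have hconj : HasDerivAt (fun s => (starRingEnd ℂ) (z s)) ((starRingEnd ℂ) (c * z t)) t :=
      hz'.star
    have hmul := hz'.mul hconj
    have hre := Complex.reCLM.hasFDerivAt.comp_hasDerivAt t hmul
    have heq : (⇑Complex.reCLM ∘ (z * fun s => (starRingEnd ℂ) (z s))) = r := by
      funext s
      simp only [Function.comp_apply, Pi.mul_apply, Complex.reCLM_apply, Complex.mul_conj,
        Complex.ofReal_re, hr]
      exact (Complex.sq_norm _).symm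
    rw [heq] at hre
    refine hre.congr_deriv (Eq.symm ?_)
    have key : c * z t * (starRingEnd ℂ) (z t) + z t * (starRingEnd ℂ) (c * z t)
        = (c + (starRingEnd ℂ) c) * ((Complex.normSq (z t) : ℝ) : ℂ) := by
      rw [map_mul]
      rw [show c * z t * (starRingEnd ℂ) (z t) + z t * ((starRingEnd ℂ) c * (starRingEnd ℂ) (z t))
          = (c + (starRingEnd ℂ) c) * (z t * (starRingEnd ℂ) (z t)) by ring, Complex.mul_conj]
    simp only [Complex.reCLM_apply, key, Complex.add_conj]
    have hcre : c.re = β₁ + β₂ * A ^ 2 + A ^ 4 := by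
      simp [hc, ← Complex.ofReal_pow]
    rw [← Complex.ofReal_mul, Complex.ofReal_re, hcre]
    have hN : Complex.normSq (z t) = A ^ 2 := (Complex.sq_norm _).symm
    rw [hN, hd, hr]
    ring
  have hpos : ∀ t ∈ Set.Icc a b, 0 < d t := by
    intro t ht
    obtain ⟨hz0, hAne⟩ := havoid t ht
    have hA0 : 0 < ‖z t‖ := norm_pos_iff.mpr hz0
    have hrpos : 0 < r t := pow_pos hA0 2
    have hsq : Real.sqrt β₁ ^ 2 = β₁ := Real.sq_sqrt hβ₁.le
    have hrne : r t ≠ Real.sqrt β₁ := by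
      intro h
      apply hAne
      have h1 : ‖z t‖ = Real.sqrt (Real.sqrt β₁) := by
        rw [← h, hr]
        simp [Real.sqrt_sq hA0.le]
      rw [h1, Real.sqrt_eq_rpow, Real.sqrt_eq_rpow, ← Real.rpow_mul hβ₁.le]
      norm_num
    have hfac : β₁ + β₂ * r t + r t ^ 2 = (r t - Real.sqrt β₁) ^ 2 := by
      rw [hβ₂]; nlinarith [hsq]
    have hsqpos : 0 < (r t - Real.sqrt β₁) ^ 2 :=
      pow_two_pos_of_ne_zero (sub_ne_zero.mpr hrne)
    rw [hd]
    simp only [hfac]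
    positivity
  have hmono : StrictMonoOn r (Set.Icc a b) := by
    apply strictMonoOn_of_deriv_pos (convex_Icc a b)
    · exact fun t _ => (hderiv t).continuousAt.continuousWithinAt
    · intro t ht
      rw [interior_Icc] at ht
      rw [(hderiv t).deriv]
      exact hpos t ⟨ht.1.le, ht.2.le⟩
  have hrab : r a < r b :=
    hmono ⟨le_refl a, hab.le⟩ ⟨hab.le, le_refl b⟩ hab
  exact lt_of_pow_lt_pow_left₀ 2 (norm_nonneg _) hrab
end
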